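/- Let A ∈ T_{p,n} (p ≥ 2) be nonsingular, let λ(A) > 0 be the minimum of ‖A x^{p-1}‖² over the unit sphere, and let B ∈ T_{p,n} satisfy ‖B‖_Frob < √(λ(A)). Then for any b ∈ ℝⁿ, every solution x of A x^{p-1} + B |x|^{p-1} = b satisfies ‖x‖ ≤ ‖b‖^{1/(p-1)} / (λ(A)^{1/(2(p-1))} − ‖B‖_Frob^{1/(p-1)}). -/

import Mathlib

/-- `(A x^{k})_i = Σ_{j : Fin k → Fin n} a_{i j₁ … j_k} x_{j₁} ⋯ x_{j_k}` :
the tensor-vector product of a tensor of order `k+1` with `x`, `k` times. -/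
noncomputable def tvec {n k : ℕ} (A : Fin n → (Fin k → Fin n) → ℝ) (x : Fin n → ℝ) :
    Fin n → ℝ :=
  fun i => ∑ j : Fin k → Fin n, A i j * ∏ l, x (j l)

/-- The Euclidean norm of a vector in `ℝⁿ`. -/
noncomputable def enorm {n : ℕ} (x : Fin n → ℝ) : ℝ :=
  Real.sqrt (∑ i, x i ^ 2)

/-- The Frobenius norm of a tensor in `T_{k+1,n}`. -/
noncomputable def frob {n k : ℕ} (A : Fin n → (Fin k → Fin n) → ℝ) : ℝ :=
  Real.sqrt (∑ i, ∑ j : Fin k → Fin n, A i j ^ 2)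

lemma my_sqrt_pow {x : ℝ} (h : 0 ≤ x) (n : ℕ) : Real.sqrt (x ^ n) = Real.sqrt x ^ n := by
  rw [← Real.sqrt_sq (pow_nonneg (Real.sqrt_nonneg x) n), ← pow_mul, mul_comm, pow_mul,
    Real.sq_sqrt h]

lemma enorm_nonneg' {n : ℕ} (x : Fin n → ℝ) : 0 ≤ _root_.enorm x := Real.sqrt_nonneg _

lemma enorm_add_le' {n : ℕ} (f g : Fin n → ℝ) : _root_.enorm (fun i => f i + g i) ≤ _root_.enorm f + _root_.enorm g := by
  have hf : ∀ h : Fin n → ℝ, _root_.enorm h = ‖(WithLp.equiv 2 (Fin n → ℝ)).symm h‖ := by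
    intro h
    simp only [_root_.enorm, EuclideanSpace.norm_eq, Real.norm_eq_abs, sq_abs,
      WithLp.equiv_symm_apply, WithLp.ofLp_toLp]
  rw [hf, hf, hf]
  exact norm_add_le _ _

/-- homogeneity of tvec -/
lemma tvec_smul' {n k : ℕ} (C : Fin n → (Fin k → Fin n) → ℝ) (c : ℝ) (y : Fin n → ℝ) (i : Fin n) :
    tvec C (fun j => c * y j) i = c ^ k * tvec C y i := by
  simp only [tvec, Finset.mul_sum]
  refine Finset.sum_congr rfl fun j _ => ?_
  rw [Finset.prod_mul_distrib, Finset.prod_const]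
  simp only [Finset.card_univ, Fintype.card_fin]
  ring

/-- Cauchy-Schwarz bound on tvec -/
lemma tvec_sq_le' {n k : ℕ} (C : Fin n → (Fin k → Fin n) → ℝ) (y : Fin n → ℝ) :
    ∑ i, tvec C y i ^ 2 ≤ (∑ i, ∑ j : Fin k → Fin n, C i j ^ 2) * (∑ i, y i ^ 2) ^ k := by
  have hP : (∑ i, y i ^ 2) ^ k = ∑ j : Fin k → Fin n, ∏ l, y (j l) ^ 2 := by
    calc (∑ i, y i ^ 2) ^ k = ∏ _l : Fin k, ∑ i, y i ^ 2 := by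
          rw [Finset.prod_const, Finset.card_univ, Fintype.card_fin]
      _ = ∑ j ∈ Fintype.piFinset (fun _ : Fin k => (Finset.univ : Finset (Fin n))),
            ∏ l, y (j l) ^ 2 := Finset.prod_univ_sum _ _
      _ = ∑ j : Fin k → Fin n, ∏ l, y (j l) ^ 2 := by rw [Fintype.piFinset_univ]
  rw [Finset.sum_mul]
  refine Finset.sum_le_sum fun i _ => ?_
  calc tvec C y i ^ 2 = (∑ j : Fin k → Fin n, C i j * ∏ l, y (j l)) ^ 2 := rfl
    _ ≤ (∑ j : Fin k → Fin n, C i j ^ 2) * (∑ j : Fin k → Fin n, (∏ l, y (j l)) ^ 2) :=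
        Finset.sum_mul_sq_le_sq_mul_sq Finset.univ _ _
    _ = (∑ j : Fin k → Fin n, C i j ^ 2) * (∑ i, y i ^ 2) ^ k := by
        rw [hP]; congr 1; exact Finset.sum_congr rfl fun j _ => by rw [Finset.prod_pow]

/-- Let `A ∈ T_{p,n}` be nonsingular with `λ(A) > 0` the minimum of `‖A x^{p-1}‖²` over
the unit sphere, and let `B ∈ T_{p,n}` satisfy `‖B‖_F < √(λ(A))`.  Then every solution
`x` of `A x^{p-1} + B |x|^{p-1} = b` satisfies
`‖x‖ ≤ ‖b‖^{1/(p-1)} / (λ(A)^{1/(2(p-1))} − ‖B‖_F^{1/(p-1)})`. -/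
theorem solution_upper_bound {p n : ℕ} (hp : 2 ≤ p)
    (A B : Fin n → (Fin (p - 1) → Fin n) → ℝ)
    (hA : ∀ x : Fin n → ℝ, tvec A x = 0 → x = 0)
    (lam : ℝ) (hlam_pos : 0 < lam)
    (hlam : IsLeast {r : ℝ | ∃ x : Fin n → ℝ,
      (∑ i, x i ^ 2) = 1 ∧ r = ∑ i, tvec A x i ^ 2} lam)
    (hB : frob B < Real.sqrt lam)
    (b : Fin n → ℝ) (x : Fin n → ℝ)
    (hx : ∀ i, tvec A x i + tvec B (fun j => |x j|) i = b i) :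
    _root_.enorm x ≤ _root_.enorm b ^ ((1 : ℝ) / (p - 1)) /
      (lam ^ ((1 : ℝ) / (2 * (p - 1))) - frob B ^ ((1 : ℝ) / (p - 1))) := by
  have hk0 : p - 1 ≠ 0 := by omega
  have hcast : ((p:ℝ) - 1) = ((p - 1 : ℕ) : ℝ) := by
    rw [Nat.cast_sub (by omega : 1 ≤ p)]; norm_num
  set S := ∑ i, x i ^ 2 with hS
  have hS0 : 0 ≤ S := Finset.sum_nonneg fun i _ => sq_nonneg _
  set N := _root_.enorm x with hN
  have hN0 : 0 ≤ N := Real.sqrt_nonneg _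
  set a := Real.sqrt lam with ha
  have ha0 : 0 < a := Real.sqrt_pos.mpr hlam_pos
  set c := frob B with hc
  have hc0 : 0 ≤ c := Real.sqrt_nonneg _
  have hac : c < a := hB
  -- lower bound: lam * S^k ≤ ∑ (tvec A x)^2
  have hlow : lam * S ^ (p - 1) ≤ ∑ i, tvec A x i ^ 2 := by
    rcases eq_or_lt_of_le hS0 with h0 | hSpos
    · rw [← h0, zero_pow hk0, mul_zero]
      exact Finset.sum_nonneg fun i _ => sq_nonneg _
    · set s := Real.sqrt S with hs
      have hs0 : 0 < s := Real.sqrt_pos.mpr hSpos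
      have hy : (∑ i, (s⁻¹ * x i) ^ 2) = 1 := by
        have h1 : ∑ i, (s⁻¹ * x i) ^ 2 = s⁻¹ ^ 2 * S := by
          rw [hS, Finset.mul_sum]; exact Finset.sum_congr rfl fun i _ => by ring
        rw [h1, hs, inv_pow, Real.sq_sqrt hS0]
        exact inv_mul_cancel₀ (ne_of_gt hSpos)
      have hmem : (∑ i, tvec A (fun j => s⁻¹ * x j) i ^ 2) ∈
          {r : ℝ | ∃ y : Fin n → ℝ, (∑ i, y i ^ 2) = 1 ∧ r = ∑ i, tvec A y i ^ 2} :=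
        ⟨fun j => s⁻¹ * x j, hy, rfl⟩
      have hle := hlam.2 hmem
      have heq : (∑ i, tvec A (fun j => s⁻¹ * x j) i ^ 2)
          = (s⁻¹ ^ (p - 1)) ^ 2 * ∑ i, tvec A x i ^ 2 := by
        rw [Finset.mul_sum]
        exact Finset.sum_congr rfl fun i _ => by rw [tvec_smul']; ring
      rw [heq] at hle
      have hsk : S ^ (p - 1) = (s ^ (p - 1)) ^ 2 := by
        rw [hs, ← pow_mul, mul_comm, pow_mul, Real.sq_sqrt hS0]
      calc lam * S ^ (p - 1) ≤ ((s⁻¹ ^ (p - 1)) ^ 2 * ∑ i, tvec A x i ^ 2) * S ^ (p - 1) :=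
            mul_le_mul_of_nonneg_right hle (pow_nonneg hS0 _)
        _ = ∑ i, tvec A x i ^ 2 := by
            rw [hsk, inv_pow]
            field_simp
  -- _root_.enorm (tvec A x) ≥ a * N^k
  have hAx : a * N ^ (p - 1) ≤ _root_.enorm (tvec A x) := by
    have h1 : Real.sqrt (lam * S ^ (p - 1)) ≤ Real.sqrt (∑ i, tvec A x i ^ 2) :=
      Real.sqrt_le_sqrt hlow
    rwa [Real.sqrt_mul hlam_pos.le, my_sqrt_pow hS0] at h1
  -- _root_.enorm (tvec B |x|) ≤ c * N^k
  have hBx : _root_.enorm (tvec B (fun j => |x j|)) ≤ c * N ^ (p - 1) := by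
    have h1 : ∑ i, tvec B (fun j => |x j|) i ^ 2
        ≤ (∑ i, ∑ j : Fin (p - 1) → Fin n, B i j ^ 2) * S ^ (p - 1) := by
      have h2 := tvec_sq_le' B (fun j => |x j|)
      simpa [sq_abs] using h2
    have h2 : Real.sqrt (∑ i, tvec B (fun j => |x j|) i ^ 2)
        ≤ Real.sqrt ((∑ i, ∑ j : Fin (p - 1) → Fin n, B i j ^ 2) * S ^ (p - 1)) :=
      Real.sqrt_le_sqrt h1
    calc _root_.enorm (tvec B (fun j => |x j|)) ≤ _ := h2
      _ = c * N ^ (p - 1) := by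
          rw [Real.sqrt_mul (Finset.sum_nonneg fun i _ =>
            Finset.sum_nonneg fun j _ => sq_nonneg _), my_sqrt_pow hS0]
          rfl
  -- triangle
  have htri : _root_.enorm (tvec A x) ≤ _root_.enorm b + _root_.enorm (tvec B (fun j => |x j|)) := by
    have hfe : tvec A x = fun i => b i + (- tvec B (fun j => |x j|) i) := by
      funext i; have := hx i; linarith
    rw [hfe]
    refine le_trans (enorm_add_le' _ _) ?_
    have h3 : _root_.enorm (fun i => - tvec B (fun j => |x j|) i) = _root_.enorm (tvec B (fun j => |x j|)) := by
      simp [_root_.enorm]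
    rw [h3]
  have hkey : (a - c) * N ^ (p - 1) ≤ _root_.enorm b := by nlinarith [pow_nonneg hN0 (p - 1)]
  -- take k-th roots
  have hNk : N ^ (p - 1) ≤ _root_.enorm b / (a - c) :=
    (le_div_iff₀ (by linarith)).mpr (by linarith [hkey])
  have hNle : N ≤ (_root_.enorm b / (a - c)) ^ (((p - 1 : ℕ):ℝ))⁻¹ := by
    calc N = (N ^ (p - 1)) ^ (((p - 1 : ℕ):ℝ))⁻¹ :=
          (Real.pow_rpow_inv_natCast hN0 hk0).symm
      _ ≤ _ := Real.rpow_le_rpow (pow_nonneg hN0 _) hNk (by positivity)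
  rw [Real.div_rpow (enorm_nonneg' b) (by linarith)] at hNle
  -- now compare denominators
  set u := a ^ (((p - 1 : ℕ):ℝ))⁻¹ with hu
  set v := c ^ (((p - 1 : ℕ):ℝ))⁻¹ with hv
  have hu0 : 0 < u := Real.rpow_pos_of_pos ha0 _
  have hv0 : 0 ≤ v := Real.rpow_nonneg hc0 _
  have hvu : v < u := by
    rcases eq_or_lt_of_le hc0 with h0 | hcpos
    · rw [hv, ← h0, Real.zero_rpow (by positivity)]; exact hu0
    · exact Real.rpow_lt_rpow hc0 hac (by positivity)
  have huk : u ^ (p - 1) = a := Real.rpow_inv_natCast_pow ha0.le hk0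
  have hvk : v ^ (p - 1) = c := Real.rpow_inv_natCast_pow hc0 hk0
  have hsup : (u - v) ^ (p - 1) ≤ a - c := by
    have h4 := pow_add_pow_le (x := u - v) (y := v) (by linarith) hv0 hk0
    rw [sub_add_cancel, huk] at h4
    linarith [hvk ▸ h4]
  have hD : u - v ≤ (a - c) ^ (((p - 1 : ℕ):ℝ))⁻¹ := by
    calc u - v = ((u - v) ^ (p - 1)) ^ (((p - 1 : ℕ):ℝ))⁻¹ :=
          (Real.pow_rpow_inv_natCast (by linarith) hk0).symm
      _ ≤ _ := Real.rpow_le_rpow (pow_nonneg (by linarith) _) hsup (by positivity)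
  have hgoal2 : _root_.enorm b ^ (((p - 1 : ℕ):ℝ))⁻¹ / (a - c) ^ (((p - 1 : ℕ):ℝ))⁻¹
      ≤ _root_.enorm b ^ (((p - 1 : ℕ):ℝ))⁻¹ / (u - v) :=
    div_le_div_of_nonneg_left (Real.rpow_nonneg (enorm_nonneg' b) _) (by linarith) hD
  have hmain : N ≤ _root_.enorm b ^ (((p - 1 : ℕ):ℝ))⁻¹ / (u - v) := le_trans hNle hgoal2
  -- rewrite the goal into this form
  have e2 : lam ^ ((1:ℝ) / (2 * ((p:ℝ) - 1))) = u := by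
    rw [hu, ha, Real.sqrt_eq_rpow, ← Real.rpow_mul hlam_pos.le]
    congr 1
    rw [hcast]
    have : ((p - 1 : ℕ):ℝ) ≠ 0 := by positivity
    field_simp
  rw [e2]
  have e1 : (1:ℝ) / ((p:ℝ) - 1) = (((p - 1 : ℕ):ℝ))⁻¹ := by rw [hcast, one_div]
  rw [e1]
  exact hmain
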